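/- Consider the 1-D Gaussian mixture with equal class probabilities p = 1/2, class means γ₁ ≤ γ₂, and common standard deviation σ > 0. For w = 1, the population hinge loss b ↦ L(h_{1,b}; μ_c) is monotonically decreasing on (−∞, −(γ₁+γ₂)/2) and monotonically increasing on (−(γ₁+γ₂)/2, ∞), so its unique minimizer over b is b = −(γ₁+γ₂)/2. -/

import Mathlib

open MeasureTheory ProbabilityTheory

/-- The balanced 1-D Gaussian mixture: with probability `1/2`, label `-1` and `x ~ N(γ₁, σ²)`;
with probability `1/2`, label `+1` and `x ~ N(γ₂, σ²)`. -/
noncomputable def gaussMixBal (γ₁ γ₂ σ : ℝ) : Measure (ℝ × ℝ) :=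
  ENNReal.ofReal (1 / 2) • ((gaussianReal γ₁ (Real.toNNReal (σ ^ 2))).map (fun x => (x, -1))) +
  ENNReal.ofReal (1 / 2) • ((gaussianReal γ₂ (Real.toNNReal (σ ^ 2))).map (fun x => (x, 1)))

/-- Population hinge loss (λ = 0) of the linear classifier `h_{w,b}` under `μ`. -/
noncomputable def hingeLoss (w b : ℝ) (μ : Measure (ℝ × ℝ)) : ℝ :=
  ∫ z, max 0 (1 - z.2 * (w * z.1 + b)) ∂μ

open Real
open scoped NNReal ENNReal

section aux

lemma integrable_id_gauss (m : ℝ) (v : ℝ≥0) (hv : v ≠ 0) :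
    Integrable (fun x => x) (gaussianReal m v) := by
  have hv0 : (0:ℝ) < v := lt_of_le_of_ne v.2 (by exact_mod_cast (Ne.symm hv))
  rw [gaussianReal_of_var_ne_zero m hv,
    integrable_withDensity_iff (measurable_gaussianPDF m v)
      (ae_of_all _ fun x => ENNReal.ofReal_lt_top)]
  have hpdf : ∀ x, ((gaussianPDF m v x).toReal) = gaussianPDFReal m v x := fun x =>
    ENNReal.toReal_ofReal (gaussianPDFReal_nonneg m v x)
  simp only [hpdf, gaussianPDFReal]
  have hb : (0:ℝ) < 1 / (2 * v) := by positivity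
  have h1 : Integrable (fun x : ℝ => (x + m) * ((√(2 * π * v))⁻¹ * rexp (-(1/(2*v)) * x ^ 2))) := by
    have hA : Integrable (fun x : ℝ => (√(2 * π * (v:ℝ)))⁻¹ * (x * rexp (-(1/(2*(v:ℝ))) * x ^ 2))) :=
      (integrable_mul_exp_neg_mul_sq hb).const_mul _
    have hB : Integrable (fun x : ℝ => (m * (√(2 * π * (v:ℝ)))⁻¹) * rexp (-(1/(2*(v:ℝ))) * x ^ 2)) :=
      (integrable_exp_neg_mul_sq hb).const_mul _
    exact (hA.add hB).congr (by filter_upwards with x; simp only [Pi.add_apply]; ring)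
  have := h1.comp_sub_right m
  refine this.congr ?_
  filter_upwards with x
  simp only [sub_add_cancel]
  rw [neg_div]
  ring_nf

lemma integrable_max_gauss (c m : ℝ) (v : ℝ≥0) (hv : v ≠ 0) :
    Integrable (fun x => max 0 (c + x)) (gaussianReal m v) := by
  have h : Integrable (fun x : ℝ => |x| + |c|) (gaussianReal m v) :=
    (integrable_id_gauss m v hv).abs.add (integrable_const _)
  refine h.mono' ?_ ?_
  · exact (continuous_const.max (continuous_const.add continuous_id)).aestronglyMeasurable
  · filter_upwards with x
    rw [Real.norm_eq_abs, abs_of_nonneg (le_max_left _ _)]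
    refine max_le (by positivity) ?_
    calc c + x ≤ |c| + |x| := add_le_add (le_abs_self c) (le_abs_self x)
    _ = |x| + |c| := by ring

lemma integrable_max_sub_gauss' (c m : ℝ) (v : ℝ≥0) (hv : v ≠ 0) :
    Integrable (fun x => max 0 (c - x)) (gaussianReal m v) := by
  have h : Integrable (fun x : ℝ => |x| + |c|) (gaussianReal m v) :=
    (integrable_id_gauss m v hv).abs.add (integrable_const _)
  refine h.mono' ?_ ?_
  · exact (continuous_const.max (continuous_const.sub continuous_id)).aestronglyMeasurable
  · filter_upwards with x
    rw [Real.norm_eq_abs, abs_of_nonneg (le_max_left _ _)]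
    refine max_le (by positivity) ?_
    calc c - x ≤ |c| + |x| := by
          have := le_abs_self c; have := neg_abs_le x; linarith
    _ = |x| + |c| := by ring

/-- `F t = E[max(0, t + g)]`, `g ~ N(0, v)`. -/
noncomputable def gaussF (v : ℝ≥0) (t : ℝ) : ℝ := ∫ x, max 0 (t + x) ∂(gaussianReal 0 v)

lemma integral_max_gauss (c m : ℝ) (v : ℝ≥0) :
    ∫ x, max 0 (c + x) ∂(gaussianReal m v) = gaussF v (c + m) := by
  have hmap : (gaussianReal 0 v).map (· + m) = gaussianReal m v := by
    rw [gaussianReal_map_add_const, zero_add]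
  rw [← hmap, integral_map (by fun_prop : Measurable fun x : ℝ => x + m).aemeasurable
    (Continuous.aestronglyMeasurable (by fun_prop))]
  refine integral_congr_ae (ae_of_all _ fun x => ?_)
  simp only
  ring_nf

lemma integral_max_sub_gauss (c m : ℝ) (v : ℝ≥0) :
    ∫ x, max 0 (c - x) ∂(gaussianReal m v) = gaussF v (c - m) := by
  have h1 : (⟨(-1:ℝ)^2, sq_nonneg _⟩ : ℝ≥0) = 1 := by ext; norm_num
  have hmap : (gaussianReal 0 v).map (fun x => -1 * x) = gaussianReal 0 v := by
    rw [show (fun x : ℝ => -1 * x) = ((-1 : ℝ) * ·) from rfl, gaussianReal_map_const_mul,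
      mul_zero]
    convert congrArg (gaussianReal 0) (one_mul v) using 2
    ext; norm_num
  have hshift : (gaussianReal 0 v).map (· + m) = gaussianReal m v := by
    rw [gaussianReal_map_add_const, zero_add]
  rw [← hshift, integral_map (by fun_prop : Measurable fun x : ℝ => x + m).aemeasurable
    (Continuous.aestronglyMeasurable (by fun_prop))]
  have : ∫ x, max 0 (c - (x + m)) ∂(gaussianReal 0 v)
      = ∫ x, max 0 ((c - m) + x) ∂((gaussianReal 0 v).map (fun x => -1 * x)) := by
    rw [integral_map (by fun_prop : Measurable fun x : ℝ => -1 * x).aemeasurable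
      (Continuous.aestronglyMeasurable (by fun_prop))]
    refine integral_congr_ae (ae_of_all _ fun x => ?_)
    simp only
    ring_nf
  rw [this, hmap]
  rfl

lemma ptwise_le (a x s t : ℝ) (hs : 0 ≤ s) (hst : s ≤ t) :
    max 0 (a+s+x) + max 0 (a-s+x) ≤ max 0 (a+t+x) + max 0 (a-t+x) := by
  simp only [max_def]; split_ifs <;> linarith

lemma ptwise_lt (a x s t : ℝ) (hs : 0 ≤ s) (hst : s < t) (hp : |a + x| < t) :
    max 0 (a+s+x) + max 0 (a-s+x) < max 0 (a+t+x) + max 0 (a-t+x) := by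
  rw [abs_lt] at hp
  simp only [max_def]; split_ifs <;> linarith

lemma gauss_pos_Ioo {v : ℝ≥0} (hv : v ≠ 0) (m : ℝ) {l u : ℝ} (h : l < u) :
    0 < gaussianReal m v (Set.Ioo l u) := by
  rw [gaussianReal_apply m hv, lintegral_pos_iff_support (measurable_gaussianPDF m v)]
  have hsupp : Function.support (gaussianPDF m v) = Set.univ := by
    ext x
    simp [Function.support, (gaussianPDF_pos m hv x).ne']
  rw [hsupp, Measure.restrict_apply_univ]
  simp [Real.volume_Ioo, h]

lemma gaussF_key {v : ℝ≥0} (hv : v ≠ 0) (a s t : ℝ) (hs : 0 ≤ s) (hst : s < t) :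
    gaussF v (a+s) + gaussF v (a-s) < gaussF v (a+t) + gaussF v (a-t) := by
  set G := gaussianReal 0 v with hG
  have i1 : Integrable (fun x => max 0 (a+t+x)) G := integrable_max_gauss _ _ _ hv
  have i2 : Integrable (fun x => max 0 (a-t+x)) G := integrable_max_gauss _ _ _ hv
  have i3 : Integrable (fun x => max 0 (a+s+x)) G := integrable_max_gauss _ _ _ hv
  have i4 : Integrable (fun x => max 0 (a-s+x)) G := integrable_max_gauss _ _ _ hv
  have hD : (gaussF v (a+t) + gaussF v (a-t)) - (gaussF v (a+s) + gaussF v (a-s))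
      = ∫ x, (max 0 (a+t+x) + max 0 (a-t+x) - (max 0 (a+s+x) + max 0 (a-s+x))) ∂G := by
    have h := integral_sub (i1.add i2) (i3.add i4)
    simp only [Pi.add_apply] at h
    rw [h, integral_add i1 i2, integral_add i3 i4]
    rfl
  have hpos : 0 < ∫ x, (max 0 (a+t+x) + max 0 (a-t+x) - (max 0 (a+s+x) + max 0 (a-s+x))) ∂G := by
    rw [integral_pos_iff_support_of_nonneg_ae
      (ae_of_all _ fun x => sub_nonneg.mpr (ptwise_le a x s t hs hst.le))
      ((i1.add i2).sub (i3.add i4))]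
    refine lt_of_lt_of_le (gauss_pos_Ioo hv 0 (show -a-t < -a+t by linarith)) (measure_mono ?_)
    intro x hx
    have habs : |a + x| < t := by
      rw [abs_lt]
      exact ⟨by linarith [hx.1], by linarith [hx.2]⟩
    exact (sub_pos.mpr (ptwise_lt a x s t hs hst habs)).ne'
  linarith

end aux

theorem stmt2 (γ₁ γ₂ σ : ℝ) (hγ : γ₁ ≤ γ₂) (hσ : 0 < σ) :
    StrictAntiOn (fun b => hingeLoss 1 b (gaussMixBal γ₁ γ₂ σ)) (Set.Iic (-(γ₁ + γ₂) / 2)) ∧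
    StrictMonoOn (fun b => hingeLoss 1 b (gaussMixBal γ₁ γ₂ σ)) (Set.Ici (-(γ₁ + γ₂) / 2)) ∧
    ∀ b : ℝ, b ≠ -(γ₁ + γ₂) / 2 →
      hingeLoss 1 (-(γ₁ + γ₂) / 2) (gaussMixBal γ₁ γ₂ σ) < hingeLoss 1 b (gaussMixBal γ₁ γ₂ σ) := by
  set v : ℝ≥0 := Real.toNNReal (σ ^ 2) with hvdef
  have hv : v ≠ 0 := by
    rw [hvdef, Ne, Real.toNNReal_eq_zero]
    push_neg
    positivity
  set c : ℝ := -(γ₁ + γ₂) / 2 with hc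
  set a : ℝ := 1 + (γ₁ - γ₂) / 2 with ha
  -- step 1 : the hinge loss formula
  have hL : ∀ b, hingeLoss 1 b (gaussMixBal γ₁ γ₂ σ)
      = (1/2) * gaussF v (a + (b - c)) + (1/2) * gaussF v (a - (b - c)) := by
    intro b
    have hcont : Continuous (fun z : ℝ × ℝ => max 0 (1 - z.2 * (1 * z.1 + b))) := by fun_prop
    have e1 : ∫ z, max 0 (1 - z.2 * (1 * z.1 + b))
        ∂((gaussianReal γ₁ v).map (fun x => (x, (-1:ℝ)))) = gaussF v ((1 + b) + γ₁) := by
      rw [integral_map (by fun_prop : Measurable fun x : ℝ => (x, (-1:ℝ))).aemeasurable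
        hcont.aestronglyMeasurable, ← integral_max_gauss (1 + b) γ₁ v]
      refine integral_congr_ae (ae_of_all _ fun x => ?_)
      simp only
      ring_nf
    have e2 : ∫ z, max 0 (1 - z.2 * (1 * z.1 + b))
        ∂((gaussianReal γ₂ v).map (fun x => (x, (1:ℝ)))) = gaussF v ((1 - b) - γ₂) := by
      rw [integral_map (by fun_prop : Measurable fun x : ℝ => (x, (1:ℝ))).aemeasurable
        hcont.aestronglyMeasurable, ← integral_max_sub_gauss (1 - b) γ₂ v]
      refine integral_congr_ae (ae_of_all _ fun x => ?_)
      simp only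
      ring_nf
    have hi1 : Integrable (fun z : ℝ × ℝ => max 0 (1 - z.2 * (1 * z.1 + b)))
        ((gaussianReal γ₁ v).map (fun x => (x, (-1:ℝ)))) := by
      rw [integrable_map_measure hcont.aestronglyMeasurable
        (by fun_prop : Measurable fun x : ℝ => (x, (-1:ℝ))).aemeasurable]
      refine (integrable_max_gauss (1 + b) γ₁ v hv).congr (ae_of_all _ fun x => ?_)
      simp only [Function.comp]
      ring_nf
    have hi2 : Integrable (fun z : ℝ × ℝ => max 0 (1 - z.2 * (1 * z.1 + b)))
        ((gaussianReal γ₂ v).map (fun x => (x, (1:ℝ)))) := by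
      rw [integrable_map_measure hcont.aestronglyMeasurable
        (by fun_prop : Measurable fun x : ℝ => (x, (1:ℝ))).aemeasurable]
      refine (integrable_max_sub_gauss' (1 - b) γ₂ v hv).congr (ae_of_all _ fun x => ?_)
      simp only [Function.comp]
      ring_nf
    have htop : (ENNReal.ofReal (1/2)) ≠ ⊤ := ENNReal.ofReal_ne_top
    rw [hingeLoss, gaussMixBal,
      integral_add_measure (hi1.smul_measure htop) (hi2.smul_measure htop),
      integral_smul_measure, integral_smul_measure, e1, e2,
      ENNReal.toReal_ofReal (by norm_num : (0:ℝ) ≤ 1/2), smul_eq_mul, smul_eq_mul,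
      show (1:ℝ) + b + γ₁ = a + (b - c) by simp only [ha, hc]; ring,
      show (1:ℝ) - b - γ₂ = a - (b - c) by simp only [ha, hc]; ring]
  -- step 2 : symmetric strict monotonicity
  have Geq : ∀ u : ℝ, (1/2) * gaussF v (a+u) + (1/2) * gaussF v (a-u)
      = (1/2) * gaussF v (a+|u|) + (1/2) * gaussF v (a-|u|) := by
    intro u
    rcases abs_cases u with ⟨h1, _⟩ | ⟨h1, _⟩ <;> rw [h1]
    rw [show a + -u = a - u by ring, show a - -u = a + u by ring]
    ring
  have key2 : ∀ u w : ℝ, |u| < |w| →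
      (1/2) * gaussF v (a+u) + (1/2) * gaussF v (a-u)
        < (1/2) * gaussF v (a+w) + (1/2) * gaussF v (a-w) := by
    intro u w h
    rw [Geq u, Geq w]
    have := gaussF_key hv a |u| |w| (abs_nonneg u) h
    linarith
  refine ⟨?_, ?_, ?_⟩
  · intro b₁ h₁ b₂ h₂ h12
    simp only
    rw [hL, hL]
    simp only [Set.mem_Iic] at h₁ h₂
    refine key2 _ _ ?_
    rw [abs_of_nonpos (sub_nonpos.mpr h₂), abs_of_nonpos (sub_nonpos.mpr (h12.le.trans h₂))]
    linarith
  · intro b₁ h₁ b₂ h₂ h12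
    simp only
    rw [hL, hL]
    simp only [Set.mem_Ici] at h₁ h₂
    refine key2 _ _ ?_
    rw [abs_of_nonneg (sub_nonneg.mpr h₁), abs_of_nonneg (sub_nonneg.mpr h₂)]
    linarith
  · intro b hb
    rw [hL, hL]
    refine key2 _ _ ?_
    rw [sub_self, abs_zero]
    exact abs_pos.mpr (sub_ne_zero.mpr hb)
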